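/- Fix Φ₁, Φ₂, Φ₃ ∈ [0, π). For r₁, r₂, r₃ > 0 define ℓ₁ = √(r₂² + r₃² + 2r₂r₃cos Φ₁), ℓ₂ = √(r₃² + r₁² + 2r₃r₁cos Φ₂), ℓ₃ = √(r₁² + r₂² + 2r₁r₂cos Φ₃), and define θ₁ = arccos((ℓ₂² + ℓ₃² − ℓ₁²)/(2ℓ₂ℓ₃)), θ₂ = arccos((ℓ₃² + ℓ₁² − ℓ₂²)/(2ℓ₃ℓ₁)), θ₃ = arccos((ℓ₁² + ℓ₂² − ℓ₃²)/(2ℓ₁ℓ₂)). Suppose at the point (r₁, r₂, r₃) the lengths ℓ₁, ℓ₂, ℓ₃ satisfy the strict triangle inequalities. Then the partial derivatives satisfy the symmetry r₂ · ∂θ₁/∂r₂ = r₁ · ∂θ₂/∂r₁ (and similarly for the other pairs of indices). -/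

import Mathlib

open Real

/-- The Euclidean distance between the centers of the circles of radii `r (i+1)` and
`r (i+2)` meeting at exterior angle `Φ i` (indices mod 3). -/
noncomputable def ellE (Φ r : Fin 3 → ℝ) (i : Fin 3) : ℝ :=
  Real.sqrt (r (i + 1) ^ 2 + r (i + 2) ^ 2 + 2 * r (i + 1) * r (i + 2) * Real.cos (Φ i))

/-- The inner angle at the `i`-th vertex of the Euclidean triangle with side lengths
`ellE Φ r`, via the Euclidean law of cosines. -/
noncomputable def thetaE (Φ r : Fin 3 → ℝ) (i : Fin 3) : ℝ :=
  Real.arccos ((ellE Φ r (i + 1) ^ 2 + ellE Φ r (i + 2) ^ 2 - ellE Φ r i ^ 2) /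
    (2 * ellE Φ r (i + 1) * ellE Φ r (i + 2)))

lemma arg_nonneg (a b c : ℝ) (h1 : -1 ≤ c) (h2 : c ≤ 1) : 0 ≤ a ^ 2 + b ^ 2 + 2 * a * b * c := by
  nlinarith [mul_nonneg (sq_nonneg (a + b)) (by linarith : (0:ℝ) ≤ 1 + c),
    mul_nonneg (sq_nonneg (a - b)) (by linarith : (0:ℝ) ≤ 1 - c)]

lemma quad_pos (a b c : ℝ) (ha : 0 ≤ a) (hb : 0 ≤ b) (hc : 0 ≤ c)
    (h1 : Real.sqrt a < Real.sqrt b + Real.sqrt c)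
    (h2 : Real.sqrt b < Real.sqrt c + Real.sqrt a)
    (h3 : Real.sqrt c < Real.sqrt a + Real.sqrt b) :
    0 < 4*b*c - (b + c - a)^2 := by
  rw [← Real.sq_sqrt ha, ← Real.sq_sqrt hb, ← Real.sq_sqrt hc]
  have hsa := Real.sqrt_nonneg a
  have hsb := Real.sqrt_nonneg b
  have hsc := Real.sqrt_nonneg c
  nlinarith [mul_pos (sub_pos.2 h1) (sub_pos.2 h2), mul_pos (sub_pos.2 h2) (sub_pos.2 h3),
    mul_pos (sub_pos.2 h1) (sub_pos.2 h3),
    mul_pos (mul_pos (sub_pos.2 h1) (sub_pos.2 h2)) (sub_pos.2 h3)]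

lemma E' (sK su sQ N N' u' : ℝ) (hsK : 0 < sK) (hsu : 0 < su) (hsQ : 0 < sQ)
    (hQ : sQ^2 = 4*sK^2*su^2 - N^2) :
    -(1/Real.sqrt (1-(N/(2*sK*su))^2)) *
      ((N'*(2*sK*su) - N*(2*sK*(u'/(2*su))))/(2*sK*su)^2)
    = (N*u' - 2*N'*su^2)/(2*su^2*sQ) := by
  have hD : (0:ℝ) < 2*sK*su := by positivity
  have h1 : 1-(N/(2*sK*su))^2 = (sQ/(2*sK*su))^2 := by
    field_simp
    linear_combination -hQ
  rw [h1, Real.sqrt_sq (by positivity)]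
  field_simp
  ring

lemma aux (K e ce f cf x0 : ℝ) (hK : 0 < K)
    (hu : 0 < x0^2 + f^2 + 2*x0*f*cf)
    (hQ : 0 < 4*K*(x0^2+f^2+2*x0*f*cf)
        - (K + (x0^2+f^2+2*x0*f*cf) - (x0^2+e^2+2*x0*e*ce))^2) :
    deriv (fun x => Real.arccos ((K + (x^2+f^2+2*x*f*cf) - (x^2+e^2+2*x*e*ce)) /
      (2 * Real.sqrt K * Real.sqrt (x^2+f^2+2*x*f*cf)))) x0 =
    ((K + (x0^2+f^2+2*x0*f*cf) - (x0^2+e^2+2*x0*e*ce)) * (2*x0+2*f*cf)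
      - 2*(2*f*cf - 2*e*ce) * (x0^2+f^2+2*x0*f*cf)) /
    (2 * (x0^2+f^2+2*x0*f*cf) *
      Real.sqrt (4*K*(x0^2+f^2+2*x0*f*cf)
        - (K + (x0^2+f^2+2*x0*f*cf) - (x0^2+e^2+2*x0*e*ce))^2)) := by
  set u := x0^2+f^2+2*x0*f*cf with hu_def
  set v := x0^2+e^2+2*x0*e*ce with hv_def
  set N := K + u - v with hN_def
  have hsK : 0 < Real.sqrt K := Real.sqrt_pos.2 hK
  have hsu : 0 < Real.sqrt u := Real.sqrt_pos.2 hu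
  have hsQ : 0 < Real.sqrt (4*K*u - N^2) := Real.sqrt_pos.2 hQ
  have hD : (0:ℝ) < 2 * Real.sqrt K * Real.sqrt u := by positivity
  have hD2 : (2 * Real.sqrt K * Real.sqrt u)^2 = 4*K*u := by
    rw [mul_pow, mul_pow, Real.sq_sqrt hK.le, Real.sq_sqrt hu.le]; ring
  have hNlt : N^2 < (2 * Real.sqrt K * Real.sqrt u)^2 := by rw [hD2]; nlinarith
  have hg1 : (-1:ℝ) < N / (2 * Real.sqrt K * Real.sqrt u) := by
    rw [lt_div_iff₀ hD]; nlinarith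
  have hg2 : N / (2 * Real.sqrt K * Real.sqrt u) < 1 := by
    rw [div_lt_iff₀ hD]; nlinarith
  have hP : HasDerivAt (fun x : ℝ => x^2+f^2+2*x*f*cf) (2*x0+2*f*cf) x0 := by
    have h := ((hasDerivAt_pow 2 x0).add_const (f^2)).add ((hasDerivAt_id x0).const_mul (2*f*cf))
    have heq : (fun x : ℝ => x^2+f^2+2*x*f*cf) = fun x => (x^2 + f^2) + (2*f*cf)*x := by
      funext x; ring
    rw [heq]
    exact h.congr_deriv (by push_cast; ring)
  have hNd : HasDerivAt (fun x : ℝ => K + (x^2+f^2+2*x*f*cf) - (x^2+e^2+2*x*e*ce))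
      (2*f*cf - 2*e*ce) x0 := by
    have hP2 : HasDerivAt (fun x : ℝ => x^2+e^2+2*x*e*ce) (2*x0+2*e*ce) x0 := by
      have h := ((hasDerivAt_pow 2 x0).add_const (e^2)).add ((hasDerivAt_id x0).const_mul (2*e*ce))
      have heq : (fun x : ℝ => x^2+e^2+2*x*e*ce) = fun x => (x^2 + e^2) + (2*e*ce)*x := by
        funext x; ring
      rw [heq]
      exact h.congr_deriv (by push_cast; ring)
    have h := (hP.const_add K).sub hP2
    exact h.congr_deriv (by ring)
  have hsqrt : HasDerivAt (fun x : ℝ => Real.sqrt (x^2+f^2+2*x*f*cf))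
      ((2*x0+2*f*cf) / (2 * Real.sqrt u)) x0 := hP.sqrt (ne_of_gt hu)
  have hDen : HasDerivAt (fun x : ℝ => 2 * Real.sqrt K * Real.sqrt (x^2+f^2+2*x*f*cf))
      (2 * Real.sqrt K * ((2*x0+2*f*cf) / (2 * Real.sqrt u))) x0 :=
    hsqrt.const_mul (2 * Real.sqrt K)
  have hg : HasDerivAt (fun x : ℝ => (K + (x^2+f^2+2*x*f*cf) - (x^2+e^2+2*x*e*ce)) /
      (2 * Real.sqrt K * Real.sqrt (x^2+f^2+2*x*f*cf)))
      (((2*f*cf - 2*e*ce) * (2 * Real.sqrt K * Real.sqrt u)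
        - N * (2 * Real.sqrt K * ((2*x0+2*f*cf) / (2 * Real.sqrt u))))
        / (2 * Real.sqrt K * Real.sqrt u)^2) x0 := by
    have := hNd.div hDen (ne_of_gt hD)
    exact this
  have harc : HasDerivAt (fun x : ℝ => Real.arccos ((K + (x^2+f^2+2*x*f*cf) - (x^2+e^2+2*x*e*ce)) /
      (2 * Real.sqrt K * Real.sqrt (x^2+f^2+2*x*f*cf))))
      (-(1/Real.sqrt (1-(N / (2 * Real.sqrt K * Real.sqrt u))^2)) *
        (((2*f*cf - 2*e*ce) * (2 * Real.sqrt K * Real.sqrt u)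
        - N * (2 * Real.sqrt K * ((2*x0+2*f*cf) / (2 * Real.sqrt u))))
        / (2 * Real.sqrt K * Real.sqrt u)^2)) x0 :=
    (Real.hasDerivAt_arccos (ne_of_gt hg1) (ne_of_lt hg2)).comp (h₂ := Real.arccos) x0 hg
  rw [harc.deriv]
  have hE := E' (Real.sqrt K) (Real.sqrt u) (Real.sqrt (4*K*u - N^2))
    N (2*f*cf - 2*e*ce) (2*x0+2*f*cf) hsK hsu hsQ
    (by rw [Real.sq_sqrt hQ.le, Real.sq_sqrt hK.le, Real.sq_sqrt hu.le])
  rw [Real.sq_sqrt hu.le] at hE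
  exact hE

lemma key (r1 r2 r3 c1 c2 c3 : ℝ) (hr1 : 0 < r1) (hr2 : 0 < r2) (hr3 : 0 < r3)
    (hc1 : -1 < c1) (hc2 : -1 < c2) (hc3 : -1 < c3)
    (hQ : 0 < 4*(r3^2+r1^2+2*r3*r1*c2)*(r1^2+r2^2+2*r1*r2*c3)
        - ((r3^2+r1^2+2*r3*r1*c2) + (r1^2+r2^2+2*r1*r2*c3) - (r2^2+r3^2+2*r2*r3*c1))^2) :
    r2 * deriv (fun x => Real.arccos
      (((r3^2+r1^2+2*r3*r1*c2) + (x^2+r1^2+2*x*r1*c3) - (x^2+r3^2+2*x*r3*c1)) /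
        (2 * Real.sqrt (r3^2+r1^2+2*r3*r1*c2) * Real.sqrt (x^2+r1^2+2*x*r1*c3)))) r2
    = r1 * deriv (fun x => Real.arccos
      (((r2^2+r3^2+2*r2*r3*c1) + (x^2+r2^2+2*x*r2*c3) - (x^2+r3^2+2*x*r3*c2)) /
        (2 * Real.sqrt (r2^2+r3^2+2*r2*r3*c1) * Real.sqrt (x^2+r2^2+2*x*r2*c3)))) r1 := by
  have hp1 : (0:ℝ) < r2^2+r3^2+2*r2*r3*c1 := by nlinarith [sq_nonneg (r2-r3), mul_pos hr2 hr3]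
  have hp2 : (0:ℝ) < r3^2+r1^2+2*r3*r1*c2 := by nlinarith [sq_nonneg (r3-r1), mul_pos hr3 hr1]
  have hpa : (0:ℝ) < r2^2+r1^2+2*r2*r1*c3 := by nlinarith [sq_nonneg (r2-r1), mul_pos hr2 hr1]
  have hpb : (0:ℝ) < r1^2+r2^2+2*r1*r2*c3 := by nlinarith [sq_nonneg (r2-r1), mul_pos hr2 hr1]
  have hQa : 0 < 4*(r3^2+r1^2+2*r3*r1*c2)*(r2^2+r1^2+2*r2*r1*c3)
      - ((r3^2+r1^2+2*r3*r1*c2) + (r2^2+r1^2+2*r2*r1*c3) - (r2^2+r3^2+2*r2*r3*c1))^2 := by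
    nlinarith [hQ]
  have hQb : 0 < 4*(r2^2+r3^2+2*r2*r3*c1)*(r1^2+r2^2+2*r1*r2*c3)
      - ((r2^2+r3^2+2*r2*r3*c1) + (r1^2+r2^2+2*r1*r2*c3) - (r1^2+r3^2+2*r1*r3*c2))^2 := by
    nlinarith [hQ]
  rw [aux (r3^2+r1^2+2*r3*r1*c2) r3 c1 r1 c3 r2 hp2 hpa hQa,
      aux (r2^2+r3^2+2*r2*r3*c1) r3 c2 r2 c3 r1 hp1 hpb hQb]
  rw [show 4*(r2^2+r3^2+2*r2*r3*c1)*(r1^2+r2^2+2*r1*r2*c3)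
      - ((r2^2+r3^2+2*r2*r3*c1) + (r1^2+r2^2+2*r1*r2*c3) - (r1^2+r3^2+2*r1*r3*c2))^2
      = 4*(r3^2+r1^2+2*r3*r1*c2)*(r2^2+r1^2+2*r2*r1*c3)
      - ((r3^2+r1^2+2*r3*r1*c2) + (r2^2+r1^2+2*r2*r1*c3) - (r2^2+r3^2+2*r2*r3*c1))^2
      from by ring]
  have hs : 0 < Real.sqrt (4*(r3^2+r1^2+2*r3*r1*c2)*(r2^2+r1^2+2*r2*r1*c3)
      - ((r3^2+r1^2+2*r3*r1*c2) + (r2^2+r1^2+2*r2*r1*c3) - (r2^2+r3^2+2*r2*r3*c1))^2) :=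
    Real.sqrt_pos.2 hQa
  field_simp
  ring

/-- Lemma 2.3 in the Euclidean background geometry:
`r j · ∂θ i / ∂r j = r i · ∂θ j / ∂r i` for all pairs of distinct indices `i, j`. -/
theorem euclidean_deriv_symm
    (Φ r : Fin 3 → ℝ)
    (hΦ : ∀ i, Φ i ∈ Set.Ico 0 π)
    (hr : ∀ i, 0 < r i)
    (htri : ∀ i, ellE Φ r i < ellE Φ r (i + 1) + ellE Φ r (i + 2)) :
    ∀ i j : Fin 3, i ≠ j →
      r j * deriv (fun x => thetaE Φ (Function.update r j x) i) (r j) =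
      r i * deriv (fun x => thetaE Φ (Function.update r i x) j) (r i) := by
  intro i j hij
  have e01 : (0:Fin 3)+1 = 1 := rfl
  have e02 : (0:Fin 3)+2 = 2 := rfl
  have e11 : (1:Fin 3)+1 = 2 := rfl
  have e12 : (1:Fin 3)+2 = 0 := rfl
  have e21 : (2:Fin 3)+1 = 0 := rfl
  have e22 : (2:Fin 3)+2 = 1 := rfl
  have hc : ∀ k, -1 < Real.cos (Φ k) := by
    intro k
    have h := hΦ k
    calc (-1:ℝ) = Real.cos π := Real.cos_pi.symm
    _ < Real.cos (Φ k) := Real.cos_lt_cos_of_nonneg_of_le_pi h.1 le_rfl h.2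
  have hc' : ∀ k, Real.cos (Φ k) ≤ 1 := fun k => Real.cos_le_one _
  have t0 := htri 0
  have t1 := htri 1
  have t2 := htri 2
  simp only [ellE, e01, e02, e11, e12, e21, e22] at t0 t1 t2
  have hA0 : (0:ℝ) ≤ r 1 ^ 2 + r 2 ^ 2 + 2 * r 1 * r 2 * Real.cos (Φ 0) := arg_nonneg (r 1) (r 2) (Real.cos (Φ 0)) (hc 0).le (hc' 0)
  have hA1 : (0:ℝ) ≤ r 2 ^ 2 + r 0 ^ 2 + 2 * r 2 * r 0 * Real.cos (Φ 1) := arg_nonneg (r 2) (r 0) (Real.cos (Φ 1)) (hc 1).le (hc' 1)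
  have hA2 : (0:ℝ) ≤ r 0 ^ 2 + r 1 ^ 2 + 2 * r 0 * r 1 * Real.cos (Φ 2) := arg_nonneg (r 0) (r 1) (Real.cos (Φ 2)) (hc 2).le (hc' 2)
  have hQ0 := quad_pos _ _ _ hA0 hA1 hA2 t0 t1 t2
  have hQ1 := quad_pos _ _ _ hA1 hA2 hA0 t1 t2 t0
  have hQ2 := quad_pos _ _ _ hA2 hA0 hA1 t2 t0 t1
  have key0 := key (r 0) (r 1) (r 2) (Real.cos (Φ 0)) (Real.cos (Φ 1)) (Real.cos (Φ 2)) (hr 0) (hr 1) (hr 2) (hc 0) (hc 1) (hc 2) hQ0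
  have key1 := key (r 1) (r 2) (r 0) (Real.cos (Φ 1)) (Real.cos (Φ 2)) (Real.cos (Φ 0)) (hr 1) (hr 2) (hr 0) (hc 1) (hc 2) (hc 0) hQ1
  have key2 := key (r 2) (r 0) (r 1) (Real.cos (Φ 2)) (Real.cos (Φ 0)) (Real.cos (Φ 1)) (hr 2) (hr 0) (hr 1) (hc 2) (hc 0) (hc 1) hQ2
  have E01 : (fun x => thetaE Φ (Function.update r 1 x) 0) =
      (fun x => Real.arccos (((r 2 ^ 2 + r 0 ^ 2 + 2 * r 2 * r 0 * Real.cos (Φ 1)) + (x ^ 2 + r 0 ^ 2 + 2 * x * r 0 * Real.cos (Φ 2)) - (x ^ 2 + r 2 ^ 2 + 2 * x * r 2 * Real.cos (Φ 0))) / (2 * Real.sqrt (r 2 ^ 2 + r 0 ^ 2 + 2 * r 2 * r 0 * Real.cos (Φ 1)) * Real.sqrt (x ^ 2 + r 0 ^ 2 + 2 * x * r 0 * Real.cos (Φ 2))))) := by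
    funext x
    simp only [thetaE, ellE, e01, e02, e11, e12, e21, e22]
    simp [Function.update]
    rw [Real.sq_sqrt (arg_nonneg (r 2) (r 0) (Real.cos (Φ 1)) (hc 1).le (hc' 1))]
    rw [Real.sq_sqrt (arg_nonneg (r 0) x (Real.cos (Φ 2)) (hc 2).le (hc' 2))]
    rw [Real.sq_sqrt (arg_nonneg x (r 2) (Real.cos (Φ 0)) (hc 0).le (hc' 0))]
    ring_nf
  have E10 : (fun x => thetaE Φ (Function.update r 0 x) 1) =
      (fun x => Real.arccos (((r 1 ^ 2 + r 2 ^ 2 + 2 * r 1 * r 2 * Real.cos (Φ 0)) + (x ^ 2 + r 1 ^ 2 + 2 * x * r 1 * Real.cos (Φ 2)) - (x ^ 2 + r 2 ^ 2 + 2 * x * r 2 * Real.cos (Φ 1))) / (2 * Real.sqrt (r 1 ^ 2 + r 2 ^ 2 + 2 * r 1 * r 2 * Real.cos (Φ 0)) * Real.sqrt (x ^ 2 + r 1 ^ 2 + 2 * x * r 1 * Real.cos (Φ 2))))) := by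
    funext x
    simp only [thetaE, ellE, e01, e02, e11, e12, e21, e22]
    simp [Function.update]
    rw [Real.sq_sqrt (arg_nonneg x (r 1) (Real.cos (Φ 2)) (hc 2).le (hc' 2))]
    rw [Real.sq_sqrt (arg_nonneg (r 1) (r 2) (Real.cos (Φ 0)) (hc 0).le (hc' 0))]
    rw [Real.sq_sqrt (arg_nonneg (r 2) x (Real.cos (Φ 1)) (hc 1).le (hc' 1))]
    ring_nf
  have E12 : (fun x => thetaE Φ (Function.update r 2 x) 1) =
      (fun x => Real.arccos (((r 0 ^ 2 + r 1 ^ 2 + 2 * r 0 * r 1 * Real.cos (Φ 2)) + (x ^ 2 + r 1 ^ 2 + 2 * x * r 1 * Real.cos (Φ 0)) - (x ^ 2 + r 0 ^ 2 + 2 * x * r 0 * Real.cos (Φ 1))) / (2 * Real.sqrt (r 0 ^ 2 + r 1 ^ 2 + 2 * r 0 * r 1 * Real.cos (Φ 2)) * Real.sqrt (x ^ 2 + r 1 ^ 2 + 2 * x * r 1 * Real.cos (Φ 0))))) := by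
    funext x
    simp only [thetaE, ellE, e01, e02, e11, e12, e21, e22]
    simp [Function.update]
    rw [Real.sq_sqrt (arg_nonneg (r 0) (r 1) (Real.cos (Φ 2)) (hc 2).le (hc' 2))]
    rw [Real.sq_sqrt (arg_nonneg (r 1) x (Real.cos (Φ 0)) (hc 0).le (hc' 0))]
    rw [Real.sq_sqrt (arg_nonneg x (r 0) (Real.cos (Φ 1)) (hc 1).le (hc' 1))]
    ring_nf
  have E21 : (fun x => thetaE Φ (Function.update r 1 x) 2) =
      (fun x => Real.arccos (((r 2 ^ 2 + r 0 ^ 2 + 2 * r 2 * r 0 * Real.cos (Φ 1)) + (x ^ 2 + r 2 ^ 2 + 2 * x * r 2 * Real.cos (Φ 0)) - (x ^ 2 + r 0 ^ 2 + 2 * x * r 0 * Real.cos (Φ 2))) / (2 * Real.sqrt (r 2 ^ 2 + r 0 ^ 2 + 2 * r 2 * r 0 * Real.cos (Φ 1)) * Real.sqrt (x ^ 2 + r 2 ^ 2 + 2 * x * r 2 * Real.cos (Φ 0))))) := by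
    funext x
    simp only [thetaE, ellE, e01, e02, e11, e12, e21, e22]
    simp [Function.update]
    rw [Real.sq_sqrt (arg_nonneg x (r 2) (Real.cos (Φ 0)) (hc 0).le (hc' 0))]
    rw [Real.sq_sqrt (arg_nonneg (r 2) (r 0) (Real.cos (Φ 1)) (hc 1).le (hc' 1))]
    rw [Real.sq_sqrt (arg_nonneg (r 0) x (Real.cos (Φ 2)) (hc 2).le (hc' 2))]
    ring_nf
  have E20 : (fun x => thetaE Φ (Function.update r 0 x) 2) =
      (fun x => Real.arccos (((r 1 ^ 2 + r 2 ^ 2 + 2 * r 1 * r 2 * Real.cos (Φ 0)) + (x ^ 2 + r 2 ^ 2 + 2 * x * r 2 * Real.cos (Φ 1)) - (x ^ 2 + r 1 ^ 2 + 2 * x * r 1 * Real.cos (Φ 2))) / (2 * Real.sqrt (r 1 ^ 2 + r 2 ^ 2 + 2 * r 1 * r 2 * Real.cos (Φ 0)) * Real.sqrt (x ^ 2 + r 2 ^ 2 + 2 * x * r 2 * Real.cos (Φ 1))))) := by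
    funext x
    simp only [thetaE, ellE, e01, e02, e11, e12, e21, e22]
    simp [Function.update]
    rw [Real.sq_sqrt (arg_nonneg (r 1) (r 2) (Real.cos (Φ 0)) (hc 0).le (hc' 0))]
    rw [Real.sq_sqrt (arg_nonneg (r 2) x (Real.cos (Φ 1)) (hc 1).le (hc' 1))]
    rw [Real.sq_sqrt (arg_nonneg x (r 1) (Real.cos (Φ 2)) (hc 2).le (hc' 2))]
    ring_nf
  have E02 : (fun x => thetaE Φ (Function.update r 2 x) 0) =
      (fun x => Real.arccos (((r 0 ^ 2 + r 1 ^ 2 + 2 * r 0 * r 1 * Real.cos (Φ 2)) + (x ^ 2 + r 0 ^ 2 + 2 * x * r 0 * Real.cos (Φ 1)) - (x ^ 2 + r 1 ^ 2 + 2 * x * r 1 * Real.cos (Φ 0))) / (2 * Real.sqrt (r 0 ^ 2 + r 1 ^ 2 + 2 * r 0 * r 1 * Real.cos (Φ 2)) * Real.sqrt (x ^ 2 + r 0 ^ 2 + 2 * x * r 0 * Real.cos (Φ 1))))) := by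
    funext x
    simp only [thetaE, ellE, e01, e02, e11, e12, e21, e22]
    simp [Function.update]
    rw [Real.sq_sqrt (arg_nonneg x (r 0) (Real.cos (Φ 1)) (hc 1).le (hc' 1))]
    rw [Real.sq_sqrt (arg_nonneg (r 0) (r 1) (Real.cos (Φ 2)) (hc 2).le (hc' 2))]
    rw [Real.sq_sqrt (arg_nonneg (r 1) x (Real.cos (Φ 0)) (hc 0).le (hc' 0))]
    ring_nf
  have henum : ∀ k : Fin 3, k = 0 ∨ k = 1 ∨ k = 2 := by decide
  rcases henum i with rfl | rfl | rfl <;> rcases henum j with rfl | rfl | rfl <;>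
    try exact absurd rfl hij
  · rw [E01, E10]; exact key0
  · rw [E02, E20]; exact key2.symm
  · rw [E10, E01]; exact key0.symm
  · rw [E12, E21]; exact key1
  · rw [E20, E02]; exact key2
  · rw [E21, E12]; exact key1.symm
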